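/- For every G ∈ 𝓕, the one-sided Mahavier product I_G^+ has the CR-specification property. -/

import Mathlib

open Set Filter Topology

/-- One-sided Mahavier product of a relation `F` on `X`. -/
def MahavierPlus {X : Type*} (F : Set (X × X)) : Set (ℕ → X) :=
  {x | ∀ n : ℕ, (x n, x (n + 1)) ∈ F}

/-- Two-sided Mahavier product of a relation `F` on `X`. -/
def MahavierTwo {X : Type*} (F : Set (X × X)) : Set (ℤ → X) :=
  {x | ∀ n : ℤ, (x n, x (n + 1)) ∈ F}

/-- The shift map on the one-sided Mahavier product. -/
def shiftPlus {X : Type*} (F : Set (X × X)) (x : MahavierPlus F) : MahavierPlus F :=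
  ⟨fun n => (x : ℕ → X) (n + 1), fun n => x.2 (n + 1)⟩

/-- The shift map on the two-sided Mahavier product. -/
def shiftTwo {X : Type*} (F : Set (X × X)) (x : MahavierTwo F) : MahavierTwo F :=
  ⟨fun n => (x : ℤ → X) (n + 1), fun n => x.2 (n + 1)⟩

/-- The metric `D(x,y) = sup_{n ≥ 1} d(x_n, y_n)/2^n` on one-sided sequences
(coordinates are indexed from `0` here, so the weight is `2^(n+1)`). -/
noncomputable def DPlus {X : Type*} [PseudoMetricSpace X] (x y : ℕ → X) : ℝ :=
  ⨆ n : ℕ, dist (x n) (y n) / 2 ^ (n + 1)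

/-- The metric `D(x,y) = sup_{n ∈ ℤ} d(x_n, y_n)/2^{|n|}` on two-sided sequences. -/
noncomputable def DTwo {X : Type*} [PseudoMetricSpace X] (x y : ℤ → X) : ℝ :=
  ⨆ n : ℤ, dist (x n) (y n) / 2 ^ n.natAbs

/-- Topological transitivity. -/
def TopTransitive {Y : Type*} [TopologicalSpace Y] (f : Y → Y) : Prop :=
  ∀ U V : Set Y, IsOpen U → IsOpen V → U.Nonempty → V.Nonempty →
    ∃ n : ℕ, (f^[n] '' U ∩ V).Nonempty

/-- Topological mixing. -/
def TopMixing {Y : Type*} [TopologicalSpace Y] (f : Y → Y) : Prop :=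
  ∀ U V : Set Y, IsOpen U → IsOpen V → U.Nonempty → V.Nonempty →
    ∃ n₀ : ℕ, ∀ n : ℕ, n₀ ≤ n → (f^[n] '' U ∩ V).Nonempty

/-- The shadowing property for a map `f` with respect to a distance `dY`. -/
def ShadowingProp {Y : Type*} (dY : Y → Y → ℝ) (f : Y → Y) : Prop :=
  ∀ ε : ℝ, 0 < ε → ∃ δ : ℝ, 0 < δ ∧ ∀ x : ℕ → Y,
    (∀ k : ℕ, dY (f (x k)) (x (k + 1)) < δ) →
    ∃ y : Y, ∀ k : ℕ, dY (f^[k] y) (x k) < ε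

/-- The specification property for a map `f` with respect to a distance `dY`. -/
def SpecProp {Y : Type*} (dY : Y → Y → ℝ) (f : Y → Y) : Prop :=
  ∀ ε : ℝ, 0 < ε → ∃ N : ℕ, 0 < N ∧ ∀ n : ℕ, 0 < n →
    ∀ x : Fin n → Y, ∀ k l : Fin n → ℕ,
      (∀ i, k i ≤ l i) →
      (∀ i j : Fin n, (i : ℕ) + 1 = (j : ℕ) → l i + N ≤ k j) →
      ∃ y : Y, ∀ i : Fin n, ∀ m : ℕ, k i ≤ m → m ≤ l i →
        dY (f^[m] y) (f^[m] (x i)) ≤ ε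

/-- The CR-specification property for the one-sided Mahavier product of `F`. -/
def CRSpec {X : Type*} [PseudoMetricSpace X] (F : Set (X × X)) : Prop :=
  ∀ ε : ℝ, 0 < ε → ∃ N : ℕ, 0 < N ∧ ∀ n : ℕ, 0 < n →
    ∀ x : Fin n → MahavierPlus F, ∀ k l : Fin n → ℕ,
      (∀ i, k i ≤ l i) →
      (∀ i j : Fin n, (i : ℕ) + 1 = (j : ℕ) → l i + N ≤ k j) →
      ∃ y : MahavierPlus F, ∀ i : Fin n, ∀ m : ℕ, k i ≤ m → m ≤ l i →
        dist ((x i : ℕ → X) m) ((y : ℕ → X) m) ≤ ε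

/-- The image of a set under a relation. -/
def relImage {X : Type*} (F : Set (X × X)) (A : Set X) : Set X :=
  {y | ∃ a ∈ A, (a, y) ∈ F}

/-- Composition of relations. -/
def relComp {X : Type*} (F G : Set (X × X)) : Set (X × X) :=
  {p | ∃ z : X, (p.1, z) ∈ F ∧ (z, p.2) ∈ G}

/-- Iterated composition `F^n` of a relation with itself. -/
def relPow {X : Type*} (F : Set (X × X)) : ℕ → Set (X × X)
  | 0 => {p | p.1 = p.2}
  | n + 1 => relComp (relPow F n) F

/-- Membership in the family `𝓕`: `G = F_A` for some finite set `A` of positive reals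
containing `3`, `1`, and `1/2`, all of whose elements lie in `[1/3, 3]`, where
`F_A = {(x,y) ∈ [0,1]² : y = a·x for some a ∈ A}`. -/
def MemFamF (G : Set (ℝ × ℝ)) : Prop :=
  ∃ A : Finset ℝ, (3 : ℝ) ∈ A ∧ (1 : ℝ) ∈ A ∧ (1 / 2 : ℝ) ∈ A ∧
    (∀ a ∈ A, (1 / 3 : ℝ) ≤ a ∧ a ≤ 3) ∧
    G = {p : ℝ × ℝ | p.1 ∈ Set.Icc (0 : ℝ) 1 ∧ p.2 ∈ Set.Icc (0 : ℝ) 1 ∧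
          ∃ a ∈ A, p.2 = a * p.1}



/- ### Auxiliary development ### -/

lemma three_pow_ne_two_pow {a b : ℕ} (ha : 0 < a) : (3:ℕ)^a ≠ 2^b := by
  intro h
  have h3 : (3:ℕ) ∣ 2^b := h ▸ dvd_pow_self 3 ha.ne'
  have := (Nat.prime_three.dvd_of_dvd_pow h3)
  omega

lemma gamma_close (ε : ℝ) (hε : 0 < ε) :
    ∃ a b : ℕ, 0 < a ∧ (3:ℝ)^a / 2^b ≠ 1 ∧ |(3:ℝ)^a / 2^b - 1| < ε := by
  obtain ⟨M, hM⟩ := exists_nat_gt (1/ε)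
  have hM0 : 0 < M := by
    by_contra h
    push_neg at h
    interval_cases M
    · simp at hM
      have : (0:ℝ) < 1/ε := by positivity
      linarith
  set f : ℕ → ℕ := fun t => Nat.log 2 (3^t) with hf
  set γ : ℕ → ℝ := fun t => (3:ℝ)^t / 2^(f t) with hγ
  have hγ1 : ∀ t, 1 ≤ γ t := by
    intro t
    have h1 : (2:ℕ)^(f t) ≤ 3^t := Nat.pow_log_le_self 2 (by positivity)
    have h1' : ((2:ℝ))^(f t) ≤ 3^t := by exact_mod_cast h1
    have : (0:ℝ) < 2^(f t) := by positivity
    rw [hγ, le_div_iff₀ this]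
    linarith
  have hγ2 : ∀ t, γ t < 2 := by
    intro t
    have h1 : (3:ℕ)^t < 2^(f t + 1) := Nat.lt_pow_succ_log_self (by norm_num) _
    have h1' : ((3:ℝ))^t < 2^(f t + 1) := by exact_mod_cast h1
    have h2 : (0:ℝ) < 2^(f t) := by positivity
    rw [hγ, div_lt_iff₀ h2]
    rw [pow_succ] at h1'
    linarith
  have maps : ∀ t ∈ Finset.range (M+1), (⌊(γ t - 1) * M⌋₊) ∈ Finset.range M := by
    intro t _
    rw [Finset.mem_range]
    have h0 : (0:ℝ) ≤ (γ t - 1) * M := by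
      have := hγ1 t
      have : (0:ℝ) ≤ γ t - 1 := by linarith
      positivity
    have hlt : (γ t - 1) * M < M := by
      have := hγ2 t
      have hMpos : (0:ℝ) < M := by exact_mod_cast hM0
      nlinarith
    exact (Nat.floor_lt h0).mpr hlt
  obtain ⟨t1, _, t2, _, hne, heq⟩ :=
    Finset.exists_ne_map_eq_of_card_lt_of_maps_to
      (by simp) maps
  -- wlog t2 < t1
  wlog hlt : t2 < t1 generalizing t1 t2
  · exact this t2 ‹_› t1 ‹_› hne.symm heq.symm (by omega)
  -- closeness
  have hclose : |γ t1 - γ t2| < 1/M := by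
    have hMpos : (0:ℝ) < M := by exact_mod_cast hM0
    have h1 : (0:ℝ) ≤ (γ t1 - 1) * M := by have := hγ1 t1; nlinarith
    have h2 : (0:ℝ) ≤ (γ t2 - 1) * M := by have := hγ1 t2; nlinarith
    have l1 : (γ t1 - 1) * M < ⌊(γ t1 - 1) * M⌋₊ + 1 := Nat.lt_floor_add_one _
    have l2 : (γ t2 - 1) * M < ⌊(γ t2 - 1) * M⌋₊ + 1 := Nat.lt_floor_add_one _
    have g1 : (⌊(γ t1 - 1) * M⌋₊:ℝ) ≤ (γ t1 - 1) * M := Nat.floor_le h1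
    have g2 : (⌊(γ t2 - 1) * M⌋₊:ℝ) ≤ (γ t2 - 1) * M := Nat.floor_le h2
    rw [heq] at l1 g1
    have key1 : (γ t1 - γ t2) * M < 1 := by nlinarith
    have key2 : (γ t2 - γ t1) * M < 1 := by nlinarith
    rw [abs_lt]
    constructor
    · rw [show -(1/(M:ℝ)) = (-1)/M by ring, div_lt_iff₀ hMpos]; linarith
    · rw [lt_div_iff₀ hMpos]; linarith
  -- monotone f
  have hfmono : f t2 ≤ f t1 := Nat.log_mono_right (Nat.pow_le_pow_right (by norm_num) hlt.le)
  refine ⟨t1 - t2, f t1 - f t2, by omega, ?_, ?_⟩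
  · intro h
    have h2 : (3:ℝ)^(t1 - t2) = 2^(f t1 - f t2) := by
      field_simp at h
      exact_mod_cast h
    have h3 : ((3^(t1-t2) : ℕ) : ℝ) = ((2^(f t1 - f t2) : ℕ) : ℝ) := by push_cast; exact h2
    exact three_pow_ne_two_pow (by omega) (Nat.cast_injective h3)
  · have hratio : (3:ℝ)^(t1 - t2) / 2^(f t1 - f t2) = γ t1 / γ t2 := by
      rw [hγ]
      have e1 : (3:ℝ)^t1 = 3^t2 * 3^(t1 - t2) := by
        rw [← pow_add]; congr 1; omega
      have e2 : (2:ℝ)^(f t1) = 2^(f t2) * 2^(f t1 - f t2) := by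
        rw [← pow_add]; congr 1; omega
      have p2 : ((2:ℝ))^(f t2) ≠ 0 := by positivity
      have p3 : ((3:ℝ))^t2 ≠ 0 := by positivity
      have p4 : ((2:ℝ))^(f t1 - f t2) ≠ 0 := by positivity
      field_simp [e1, e2]
      rw [e1, e2]; ring
    rw [hratio]
    have h1 := hγ1 t2
    have hMpos : (0:ℝ) < M := by exact_mod_cast hM0
    have hpos2 : (0:ℝ) < γ t2 := by linarith
    have habs : |γ t1 / γ t2 - 1| = |γ t1 - γ t2| / γ t2 := by
      rw [div_sub_one hpos2.ne', abs_div, abs_of_pos hpos2]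
    rw [habs]
    have : |γ t1 - γ t2| / γ t2 ≤ |γ t1 - γ t2| := by
      apply div_le_self (abs_nonneg _) h1
    have hεM : 1/(M:ℝ) < ε := by
      rw [div_lt_iff₀ hMpos]
      rw [div_lt_iff₀ hε] at hM
      nlinarith
    linarith

lemma gamma_up (δ : ℝ) (h0 : 0 < δ) (h1 : δ ≤ 1/3) :
    ∃ a b : ℕ, 1 < (3:ℝ)^a/2^b ∧ (3:ℝ)^a/2^b * (1-δ) ≤ 1 := by
  classical
  obtain ⟨a, b, ha, hne, habs⟩ := gamma_close (δ/2) (by linarith)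
  set γ0 := (3:ℝ)^a/2^b with hγ0
  rw [abs_lt] at habs
  have h1δ : (0:ℝ) < 1 - δ := by linarith
  rcases lt_or_gt_of_ne hne with hlt | hgt
  · -- γ0 < 1, walk down from 3
    have hγ0pos : 0 < γ0 := by positivity
    have hex : ∃ t : ℕ, 3*γ0^t*(1-δ) ≤ 1 := by
      obtain ⟨t, ht⟩ := exists_pow_lt_of_lt_one (x := 1/(3*(1-δ)))
        (by positivity) hlt
      refine ⟨t, ?_⟩
      rw [lt_div_iff₀ (by positivity)] at ht
      nlinarith
    set t := Nat.find hex with htdef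
    have hspec : 3*γ0^t*(1-δ) ≤ 1 := Nat.find_spec hex
    have ht1 : 1 ≤ t := by
      rcases Nat.eq_zero_or_pos t with h | h
      · exfalso; rw [h] at hspec; norm_num at hspec; linarith
      · exact h
    have hprev : ¬ (3*γ0^(t-1)*(1-δ) ≤ 1) := Nat.find_min hex (by omega)
    push_neg at hprev
    have hval : (3:ℝ)^(1+t*a)/2^(t*b) = 3*γ0^t := by
      rw [hγ0, div_pow, mul_comm t a, mul_comm t b, ← pow_mul, ← pow_mul,
        pow_add, pow_one]
      ring
    have hstep : (3:ℝ)*γ0^t = γ0 * (3*γ0^(t-1)) := by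
      have h' : γ0^t = γ0 * γ0^(t-1) := by rw [← pow_succ']; congr 1; omega
      rw [h']; ring
    have hXpos : 0 < 3*γ0^(t-1) := by positivity
    refine ⟨1 + (t*a), t*b, ?_, ?_⟩
    · rw [hval, hstep]
      nlinarith [mul_pos (show (0:ℝ) < γ0 - (1-δ/2) by linarith) hXpos]
    · rw [hval]; exact hspec
  · exact ⟨a, b, hgt, by nlinarith⟩

lemma net (δ : ℝ) (h0 : 0 < δ) (h1 : δ ≤ 1/3) :
    ∃ N : ℕ, ∀ r : ℝ, δ/3 ≤ r → r ≤ 6/δ →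
      ∃ p q : ℕ, p + q ≤ N ∧ (1-δ)*r ≤ (3:ℝ)^p/2^q ∧ (3:ℝ)^p/2^q ≤ r := by
  classical
  obtain ⟨a, b, hγ1, hγ2⟩ := gamma_up δ h0 h1
  set γ := (3:ℝ)^a/2^b with hγ
  have hγpos : 0 < γ := by positivity
  have h1δ : (0:ℝ) < 1 - δ := by linarith
  -- choose q0 with 2^q0 ≥ 3/((1-δ)δ)
  obtain ⟨q0, hq0⟩ := pow_unbounded_of_one_lt (3/((1-δ)*δ)) (show (1:ℝ) < 2 by norm_num)
  -- g t := γ^t / 2^q0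
  have hgval : ∀ t : ℕ, (3:ℝ)^(t*a)/2^(t*b + q0) = γ^t / 2^q0 := by
    intro t
    rw [hγ, div_pow, mul_comm t a, mul_comm t b, ← pow_mul, ← pow_mul, pow_add]
    ring
  have hex : ∃ t : ℕ, 6/δ < γ^t / 2^q0 := by
    obtain ⟨t, ht⟩ := pow_unbounded_of_one_lt ((6/δ) * 2^q0) hγ1
    refine ⟨t, ?_⟩
    rw [lt_div_iff₀ (by positivity)]
    exact ht
  set tmax := Nat.find hex with htmaxdef
  have htmax : 6/δ < γ^tmax / 2^q0 := Nat.find_spec hex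
  refine ⟨tmax*(a+b) + q0, ?_⟩
  intro r hr1 hr2
  have hrpos : 0 < r := lt_of_lt_of_le (by positivity) hr1
  have hex2 : ∃ t : ℕ, (1-δ)*r < γ^t / 2^q0 := by
    refine ⟨tmax, lt_of_le_of_lt ?_ htmax⟩
    nlinarith
  set t := Nat.find hex2 with htdef
  have hspec : (1-δ)*r < γ^t / 2^q0 := Nat.find_spec hex2
  have htle : t ≤ tmax := Nat.find_min' hex2 (by
    refine lt_of_le_of_lt ?_ htmax; nlinarith)
  have ht1 : 1 ≤ t := by
    rcases Nat.eq_zero_or_pos t with h | h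
    · exfalso
      rw [h, pow_zero] at hspec
      have hq0' : 3/((1-δ)*δ) < 2^q0 := hq0
      have : (1:ℝ)/2^q0 < (1-δ)*δ/3 := by
        rw [div_lt_iff₀ (by positivity)]
        rw [div_lt_iff₀ (by positivity)] at hq0'
        nlinarith
      nlinarith [mul_le_mul_of_nonneg_left hr1 h1δ.le]
    · exact h
  have hprev : ¬ ((1-δ)*r < γ^(t-1) / 2^q0) := Nat.find_min hex2 (by omega)
  push_neg at hprev
  refine ⟨t*a, t*b + q0, ?_, ?_, ?_⟩
  · have : t*(a+b) ≤ tmax*(a+b) := Nat.mul_le_mul_right _ htle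
    calc t*a + (t*b + q0) = t*(a+b) + q0 := by ring
    _ ≤ tmax*(a+b) + q0 := by omega
  · rw [hgval t]; exact hspec.le
  · rw [hgval t]
    have hstep : γ^t = γ * γ^(t-1) := by rw [← pow_succ']; congr 1; omega
    have : γ^t/2^q0 = γ * (γ^(t-1)/2^q0) := by rw [hstep]; ring
    rw [this]
    calc γ * (γ^(t-1)/2^q0) ≤ γ * ((1-δ)*r) := by
          apply mul_le_mul_of_nonneg_left hprev hγpos.le
    _ = (γ * (1-δ)) * r := by ring
    _ ≤ 1 * r := by apply mul_le_mul_of_nonneg_right hγ2 hrpos.le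
    _ = r := one_mul r

def FA (A : Finset ℝ) : Set (ℝ × ℝ) :=
  {p : ℝ × ℝ | p.1 ∈ Set.Icc (0:ℝ) 1 ∧ p.2 ∈ Set.Icc (0:ℝ) 1 ∧ ∃ a ∈ A, p.2 = a * p.1}

section FAlemmas
variable {A : Finset ℝ} {u v c : ℝ}

lemma mem_FA : (u, v) ∈ FA A ↔ (0 ≤ u ∧ u ≤ 1) ∧ (0 ≤ v ∧ v ≤ 1) ∧ ∃ a ∈ A, v = a * u := by
  simp [FA, Set.mem_Icc, and_assoc]

lemma FA.bounds (h : (u, v) ∈ FA A) : 0 ≤ u ∧ u ≤ 1 ∧ 0 ≤ v ∧ v ≤ 1 := by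
  rw [mem_FA] at h
  exact ⟨h.1.1, h.1.2, h.2.1.1, h.2.1.2⟩

lemma FA.step_const (h1 : (1:ℝ) ∈ A) (hu : 0 ≤ u) (hu1 : u ≤ 1) : (u, u) ∈ FA A :=
  mem_FA.mpr ⟨⟨hu, hu1⟩, ⟨hu, hu1⟩, 1, h1, (one_mul u).symm⟩

lemma FA.step_half (hh : (1/2:ℝ) ∈ A) (hu : 0 ≤ u) (hu1 : u ≤ 1) : (u, u/2) ∈ FA A :=
  mem_FA.mpr ⟨⟨hu, hu1⟩, ⟨by linarith, by linarith⟩, 1/2, hh, by ring⟩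

lemma FA.step_triple (h3 : (3:ℝ) ∈ A) (hu : 0 ≤ u) (hu1 : 3*u ≤ 1) : (u, 3*u) ∈ FA A :=
  mem_FA.mpr ⟨⟨hu, by linarith⟩, ⟨by linarith, hu1⟩, 3, h3, rfl⟩

lemma FA.step_scale (hc : 0 < c) (hc1 : c ≤ 1) (h : (u, v) ∈ FA A) :
    (c*u, c*v) ∈ FA A := by
  rw [mem_FA] at h ⊢
  obtain ⟨⟨hu0, hu1⟩, ⟨hv0, hv1⟩, a, ha, hva⟩ := h
  exact ⟨⟨by positivity, by nlinarith⟩, ⟨by positivity, by nlinarith⟩, a, ha,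
    by rw [hva]; ring⟩

lemma FA.ratio (hb : ∀ a ∈ A, (1/3:ℝ) ≤ a ∧ a ≤ 3) (h : (u, v) ∈ FA A) :
    u/3 ≤ v ∧ v ≤ 3*u := by
  rw [mem_FA] at h
  obtain ⟨⟨hu0, hu1⟩, _, a, ha, hva⟩ := h
  obtain ⟨ha1, ha2⟩ := hb a ha
  constructor
  · rw [hva]; nlinarith
  · rw [hva]; nlinarith

lemma FA.pos_all (hb : ∀ a ∈ A, (1/3:ℝ) ≤ a ∧ a ≤ 3) {x : ℕ → ℝ}
    (hx : ∀ m, (x m, x (m+1)) ∈ FA A) {j : ℕ} (hj : 0 < x j) : ∀ m, 0 < x m := by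
  have fwd : ∀ m, 0 < x m → 0 < x (m+1) := fun m h => by
    have := (FA.ratio hb (hx m)).1; linarith
  have bwd : ∀ m, 0 < x (m+1) → 0 < x m := fun m h => by
    have := (FA.ratio hb (hx m)).2; linarith
  intro m
  rcases le_total j m with hle | hle
  · have : ∀ i, 0 < x (j + i) := by
      intro i
      induction i with
      | zero => simpa using hj
      | succ i ih => have := fwd (j+i) ih; rwa [show j+(i+1) = (j+i)+1 by omega]
    have := this (m - j); rwa [show j + (m-j) = m by omega] at this
  · have : ∀ d, d ≤ j → 0 < x (j - d) := by
      intro d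
      induction d with
      | zero => intro _; simpa using hj
      | succ d ih =>
        intro hd
        have h1 := ih (by omega)
        have h2 : j - d = (j - (d+1)) + 1 := by omega
        rw [h2] at h1
        exact bwd _ h1
    have := this (j - m) (by omega); rwa [show j - (j-m) = m by omega] at this

end FAlemmas

lemma window (A : Finset ℝ) (h3 : (3:ℝ) ∈ A) (h1A : (1:ℝ) ∈ A) (hhalf : (1/2:ℝ) ∈ A)
    (hb : ∀ a ∈ A, (1/3:ℝ) ≤ a ∧ a ≤ 3) (δ : ℝ) (hδ0 : 0 < δ) (hδ1 : δ ≤ 1/3)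
    (x : ℕ → ℝ) (hx : ∀ m, (x m, x (m+1)) ∈ FA A) (k l : ℕ) (hkl : k ≤ l) :
    ∃ w : ℕ → ℝ,
      (∀ m, k ≤ m → m < l → (w m, w (m+1)) ∈ FA A) ∧
      (∀ m, k ≤ m → m ≤ l → |w m - x m| ≤ 2*δ) ∧
      (∀ m, k ≤ m → m ≤ l → 0 < w m ∧ w m ≤ 1) ∧
      δ/3 ≤ w k ∧ δ/3 ≤ w l := by
  classical
  have xIcc : ∀ m, 0 ≤ x m ∧ x m ≤ 1 := fun m => ⟨(hx m).1.1, (hx m).1.2⟩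
  by_cases hbig : ∃ m, k ≤ m ∧ m ≤ l ∧ δ ≤ x m
  case neg =>
    push_neg at hbig
    refine ⟨fun _ => δ/2, ?_, ?_, ?_, by linarith, by linarith⟩
    · intro m _ _; exact FA.step_const h1A (by linarith) (by linarith)
    · intro m hm1 hm2
      have h1 := hbig m hm1 hm2
      have h2 := (xIcc m).1
      rw [abs_le]; constructor <;> linarith
    · intro m _ _; constructor <;> linarith
  case pos =>
    set m1 := Nat.find hbig with hm1def
    obtain ⟨hkm1, hm1l, hxm1⟩ : k ≤ m1 ∧ m1 ≤ l ∧ δ ≤ x m1 := Nat.find_spec hbig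
    have hm1min : ∀ m, k ≤ m → m ≤ l → m < m1 → x m < δ := by
      intro m h1 h2 h3
      have := Nat.find_min hbig h3
      push_neg at this
      exact this h1 h2
    set P : ℕ → Prop := fun m => k ≤ m ∧ δ ≤ x m with hPdef
    set m0 := Nat.findGreatest P l with hm0def
    have hPm0 : P m0 := Nat.findGreatest_spec (P := P) hm1l ⟨hkm1, hxm1⟩
    have hm0l : m0 ≤ l := Nat.findGreatest_le l
    have hm0max : ∀ m, m0 < m → m ≤ l → x m < δ := by
      intro m h1 h2
      have hng := Nat.findGreatest_is_greatest (P := P) h1 h2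
      have hk0 : k ≤ m0 := hPm0.1
      by_contra hcon
      push_neg at hcon
      exact hng (show P m from ⟨by omega, hcon⟩)
    have hk0 : k ≤ m0 := hPm0.1
    have hm1m0 : m1 ≤ m0 := Nat.find_min' hbig ⟨hPm0.1, hm0l, hPm0.2⟩
    have xpos : ∀ m, 0 < x m := FA.pos_all hb hx (j := m1) (by linarith)
    -- front recursion
    set ff : ℕ → ℝ := fun s => Nat.rec (x m1) (fun _ prev => if δ ≤ prev then prev/3 else prev) s
      with hffdef
    have ff0 : ff 0 = x m1 := rfl
    have ffS : ∀ s, ff (s+1) = if δ ≤ ff s then ff s / 3 else ff s := fun s => rfl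
    have ffIcc : ∀ s, 0 < ff s ∧ ff s ≤ 1 := by
      intro s
      induction s with
      | zero => rw [ff0]; exact ⟨xpos m1, (xIcc m1).2⟩
      | succ s ih =>
        rw [ffS s]
        split <;> constructor <;> linarith [ih.1, ih.2]
    have ffpair : ∀ s, (ff (s+1), ff s) ∈ FA A := by
      intro s
      rw [ffS s]
      split
      case isTrue h =>
        have h2 : ff s = 3 * (ff s / 3) := by ring
        have := FA.step_triple (u := ff s / 3) h3 (by linarith [(ffIcc s).1]) (by linarith [(ffIcc s).2])
        rw [← h2] at this
        exact this
      case isFalse h =>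
        exact FA.step_const h1A (ffIcc s).1.le (ffIcc s).2
    have invff : k < m1 → ∀ s, 1 ≤ s → δ/3 ≤ ff s ∧ ff s ≤ δ := by
      intro hkm
      have hxup : x m1 ≤ 3*δ := by
        have hprev : x (m1 - 1) < δ := hm1min (m1-1) (by omega) (by omega) (by omega)
        have hr := (FA.ratio hb (hx (m1-1))).2
        rw [show m1 - 1 + 1 = m1 by omega] at hr
        linarith [(xIcc (m1-1)).1]
      intro s hs
      induction s with
      | zero => omega
      | succ s ih =>
        rcases Nat.eq_zero_or_pos s with h | h
        · subst h
          rw [ffS 0, ff0, if_pos hxm1]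
          constructor <;> linarith
        · obtain ⟨ih1, ih2⟩ := ih h
          rw [ffS s]
          split
          case isTrue hc => constructor <;> linarith
          case isFalse hc => constructor <;> linarith
    -- tail recursion
    set gg : ℕ → ℝ := fun s => Nat.rec (x m0) (fun _ prev => if δ ≤ prev then prev/2 else prev) s
      with hggdef
    have gg0 : gg 0 = x m0 := rfl
    have ggS : ∀ s, gg (s+1) = if δ ≤ gg s then gg s / 2 else gg s := fun s => rfl
    have ggIcc : ∀ s, 0 < gg s ∧ gg s ≤ 1 := by
      intro s
      induction s with
      | zero => rw [gg0]; exact ⟨xpos m0, (xIcc m0).2⟩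
      | succ s ih =>
        rw [ggS s]
        split <;> constructor <;> linarith [ih.1, ih.2]
    have ggpair : ∀ s, (gg s, gg (s+1)) ∈ FA A := by
      intro s
      rw [ggS s]
      split
      case isTrue h => exact FA.step_half hhalf (ggIcc s).1.le (ggIcc s).2
      case isFalse h => exact FA.step_const h1A (ggIcc s).1.le (ggIcc s).2
    have invgg : m0 < l → ∀ s, 1 ≤ s → δ/2 ≤ gg s ∧ gg s ≤ 2*δ := by
      intro hml
      have hxup : x m0 ≤ 3*δ := by
        have hnext : x (m0 + 1) < δ := hm0max (m0+1) (by omega) (by omega)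
        have hr := (FA.ratio hb (hx m0)).1
        linarith
      intro s hs
      induction s with
      | zero => omega
      | succ s ih =>
        rcases Nat.eq_zero_or_pos s with h | h
        · subst h
          rw [ggS 0, gg0, if_pos hPm0.2]
          constructor <;> linarith [hPm0.2]
        · obtain ⟨ih1, ih2⟩ := ih h
          rw [ggS s]
          split
          case isTrue hc => constructor <;> linarith
          case isFalse hc => constructor <;> linarith
    -- assemble
    set w : ℕ → ℝ := fun m => if m < m1 then ff (m1 - m) else if m ≤ m0 then x m else gg (m - m0)
      with hwdef
    have wfront : ∀ m, m < m1 → w m = ff (m1 - m) := by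
      intro m h; rw [hwdef]; simp only [if_pos h]
    have wmid : ∀ m, m1 ≤ m → m ≤ m0 → w m = x m := by
      intro m h1 h2; rw [hwdef]; simp only [if_neg (by omega : ¬ m < m1), if_pos h2]
    have wtail : ∀ m, m0 < m → w m = gg (m - m0) := by
      intro m h; rw [hwdef]
      simp only [if_neg (by omega : ¬ m < m1), if_neg (by omega : ¬ m ≤ m0)]
    refine ⟨w, ?_, ?_, ?_, ?_, ?_⟩
    · -- steps
      intro m _ _
      rcases lt_or_ge m m1 with hc1 | hc1
      · rw [wfront m hc1]
        have : w (m+1) = ff (m1 - (m+1)) := by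
          rcases lt_or_ge (m+1) m1 with hc2 | hc2
          · exact wfront _ hc2
          · have : m + 1 = m1 := by omega
            rw [this, wmid m1 le_rfl hm1m0, Nat.sub_self, ff0]
        rw [this, show m1 - m = (m1 - (m+1)) + 1 by omega]
        exact ffpair _
      · rcases lt_or_ge m m0 with hc2 | hc2
        · rw [wmid m hc1 hc2.le, wmid (m+1) (by omega) (by omega)]
          exact hx m
        · have hwm : w m = gg (m - m0) := by
            rcases eq_or_lt_of_le hc2 with h | h
            · rw [← h, Nat.sub_self, gg0]
              exact wmid m0 (by omega) le_rfl
            · exact wtail m h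
          rw [hwm, wtail (m+1) (by omega), show m + 1 - m0 = (m - m0) + 1 by omega]
          exact ggpair _
    · -- error
      intro m hm1' hm2'
      rcases lt_or_ge m m1 with hc1 | hc1
      · rw [wfront m hc1]
        have hxm : x m < δ := hm1min m hm1' hm2' hc1
        have hff := invff (by omega) (m1 - m) (by omega)
        rw [abs_le]
        constructor <;> [linarith [hff.2, (xIcc m).1]; linarith [hff.1, (xIcc m).1]]
      · rcases le_or_gt m m0 with hc2 | hc2
        · rw [wmid m hc1 hc2, sub_self, abs_zero]; linarith
        · rw [wtail m hc2]
          have hxm : x m < δ := hm0max m hc2 hm2'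
          have hgg := invgg (by omega) (m - m0) (by omega)
          rw [abs_le]
          constructor <;> [linarith [hgg.2, (xIcc m).1]; linarith [hgg.1, (xIcc m).1]]
    · -- bounds
      intro m hm1' hm2'
      rcases lt_or_ge m m1 with hc1 | hc1
      · rw [wfront m hc1]
        have hff := invff (by omega) (m1 - m) (by omega)
        constructor <;> linarith [hff.1, hff.2]
      · rcases le_or_gt m m0 with hc2 | hc2
        · rw [wmid m hc1 hc2]; exact ⟨xpos m, (xIcc m).2⟩
        · rw [wtail m hc2]
          have hgg := invgg (by omega) (m - m0) (by omega)
          constructor <;> linarith [hgg.1, hgg.2]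
    · -- w k
      rcases lt_or_ge k m1 with hc1 | hc1
      · rw [wfront k hc1]
        have hff := invff (by omega) (m1 - k) (by omega)
        linarith [hff.1]
      · rw [wmid k hc1 (by omega), show k = m1 by omega]
        linarith [hxm1]
    · -- w l
      rcases lt_or_ge m0 l with hc1 | hc1
      · rw [wtail l hc1]
        have hgg := invgg hc1 (l - m0) (by omega)
        linarith [hgg.1]
      · rw [wmid l (by omega) (by omega), show l = m0 by omega]
        linarith [hPm0.2]

lemma bridge (A : Finset ℝ) (h3 : (3:ℝ) ∈ A) (h1A : (1:ℝ) ∈ A) (hhalf : (1/2:ℝ) ∈ A)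
    (δ : ℝ) (hδ0 : 0 < δ) (hδ1 : δ ≤ 1/3)
    (u v : ℝ) (hu1 : δ/6 ≤ u) (hu2 : u ≤ 1) (hv1 : δ/3 ≤ v) (hv2 : v ≤ 1)
    (gap p q : ℕ) (hpq : p + q ≤ gap)
    (h1 : (1-δ)*(v/u) ≤ (3:ℝ)^p/2^q) (h2 : (3:ℝ)^p/2^q ≤ v/u) :
    ∃ c : ℝ, 1-δ ≤ c ∧ c ≤ 1 ∧ ∃ B : ℕ → ℝ, B 0 = u ∧ B gap = c*v ∧
      ∀ t, t < gap → (B t, B (t+1)) ∈ FA A := by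
  have hupos : 0 < u := by linarith
  have hvpos : 0 < v := by linarith
  have hXpos : (0:ℝ) < 3^p/2^q := by positivity
  set X := (3:ℝ)^p/2^q with hXdef
  set c := u * X / v with hcdef
  have key1 : u * ((1 - δ) * (v / u)) = (1-δ)*v := by field_simp
  have key2 : u * (v/u) = v := by field_simp
  have hc1 : 1-δ ≤ c := by
    rw [hcdef, le_div_iff₀ hvpos]
    have := mul_le_mul_of_nonneg_left h1 hupos.le
    linarith
  have hc2 : c ≤ 1 := by
    rw [hcdef, div_le_one hvpos]
    have := mul_le_mul_of_nonneg_left h2 hupos.le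
    linarith
  have hcv : c * v = u * X := by rw [hcdef]; field_simp
  refine ⟨c, hc1, hc2, fun t => u / 2^(min t q) * 3^(t - (gap - p)), ?_, ?_, ?_⟩
  · simp
  · dsimp only
    rw [hcv, min_eq_right (by omega : q ≤ gap), show gap - (gap - p) = p by omega, hXdef]
    ring
  · intro t ht
    dsimp only
    have hqgp : q ≤ gap - p := by omega
    have h2t : (1:ℝ) ≤ 2^t := one_le_pow₀ (by norm_num)
    have h2q : (1:ℝ) ≤ 2^q := one_le_pow₀ (by norm_num)
    rcases lt_or_ge t q with hcase | hcase
    · have e1 : min t q = t := min_eq_left hcase.le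
      have e2 : min (t+1) q = t+1 := min_eq_left (by omega)
      have e3 : t - (gap - p) = 0 := by omega
      have e4 : (t+1) - (gap - p) = 0 := by omega
      rw [e1, e2, e3, e4, pow_zero, mul_one, mul_one]
      have heq : u / 2^(t+1) = (u / 2^t)/2 := by
        rw [pow_succ]; ring
      rw [heq]
      exact FA.step_half hhalf (by positivity)
        ((div_le_one (by positivity)).mpr (by linarith))
    · have e1 : min t q = q := min_eq_right hcase
      rcases lt_or_ge t (gap - p) with hcase2 | hcase2
      · have e2 : min (t+1) q = q := min_eq_right (by omega)
        have e3 : t - (gap - p) = 0 := by omega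
        have e4 : (t+1) - (gap - p) = 0 := by omega
        rw [e1, e2, e3, e4, pow_zero, mul_one]
        exact FA.step_const h1A (by positivity)
          ((div_le_one (by positivity)).mpr (by linarith))
      · have e2 : min (t+1) q = q := min_eq_right (by omega)
        have e4 : (t+1) - (gap - p) = (t - (gap - p)) + 1 := by omega
        rw [e1, e2, e4, pow_succ]
        have heq : u / 2^q * (3^(t - (gap - p)) * 3) = 3 * (u / 2^q * 3^(t - (gap - p))) := by ring
        rw [heq]
        apply FA.step_triple h3 (by positivity)
        -- 3 * (u/2^q * 3^(t-(gap-p))) ≤ 1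
        have hle : (3:ℝ)^((t - (gap - p)) + 1) ≤ 3^p := by
          apply pow_le_pow_right₀ (by norm_num)
          omega
        have hc3 : 3 * (u / 2 ^ q * 3 ^ (t - (gap - p))) = u / 2^q * 3^((t - (gap-p)) + 1) := by
          rw [pow_succ]; ring
        rw [hc3]
        have : u / 2^q * 3^((t - (gap-p)) + 1) ≤ u / 2^q * 3^p := by
          apply mul_le_mul_of_nonneg_left hle (by positivity)
        have huX : u * X ≤ v := by
          have := mul_le_mul_of_nonneg_left h2 hupos.le
          linarith
        have hXeq : u / 2^q * 3^p = u * X := by rw [hXdef]; ring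
        linarith

set_option maxHeartbeats 1000000 in
lemma mainCR (A : Finset ℝ) (h3 : (3:ℝ) ∈ A) (h1A : (1:ℝ) ∈ A) (hhalf : (1/2:ℝ) ∈ A)
    (hb : ∀ a ∈ A, (1/3:ℝ) ≤ a ∧ a ≤ 3) : CRSpec (FA A) := by
  intro ε hε
  set δ := min (ε/3) (1/3) with hδdef
  have hδ0 : 0 < δ := lt_min (by linarith) (by norm_num)
  have hδ1 : δ ≤ 1/3 := min_le_right _ _
  have hδε : 3*δ ≤ ε := by
    have := min_le_left (ε/3) (1/3); linarith
  obtain ⟨N0, hnet⟩ := net δ hδ0 hδ1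
  refine ⟨N0 + 1, by omega, ?_⟩
  intro n hn x k l hkl hsep
  have lmono : ∀ b, ∀ hb' : b < n, ∀ a, ∀ ha : a < n, a ≤ b → l ⟨a, ha⟩ ≤ l ⟨b, hb'⟩ := by
    intro b
    induction b with
    | zero =>
      intro hb' a ha hab
      have : a = 0 := by omega
      subst this
      exact le_rfl
    | succ b ihb =>
      intro hb' a ha hab
      rcases Nat.lt_or_ge a (b+1) with h | h
      · have h1 := ihb (by omega) a ha (by omega)
        have h2 : l ⟨b, by omega⟩ + (N0+1) ≤ k ⟨b+1, hb'⟩ :=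
          hsep ⟨b, by omega⟩ ⟨b+1, hb'⟩ rfl
        have h3 := hkl ⟨b+1, hb'⟩
        omega
      · have : a = b+1 := by omega
        subst this
        exact le_rfl
  have key : ∀ i, ∀ hi : i < n, ∃ f : ℕ → ℝ,
      (∀ m, m < l ⟨i, hi⟩ → (f m, f (m+1)) ∈ FA A) ∧
      (∀ j : Fin n, (j:ℕ) ≤ i → ∀ m, k j ≤ m → m ≤ l j →
        |f m - (x j : ℕ → ℝ) m| ≤ 3*δ) ∧
      (∀ m, m ≤ l ⟨i, hi⟩ → 0 ≤ f m ∧ f m ≤ 1) ∧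
      δ/6 ≤ f (l ⟨i, hi⟩) := by
    intro i
    induction i with
    | zero =>
      intro hi
      obtain ⟨w, wstep, werr, wbnd, wk, wl⟩ := window A h3 h1A hhalf hb δ hδ0 hδ1
        ((x ⟨0, hi⟩ : ℕ → ℝ)) (x ⟨0, hi⟩).2 (k ⟨0, hi⟩) (l ⟨0, hi⟩) (hkl ⟨0, hi⟩)
      have hwk := wbnd (k ⟨0, hi⟩) le_rfl (hkl ⟨0, hi⟩)
      set f : ℕ → ℝ := fun m => if m < k ⟨0, hi⟩ then w (k ⟨0, hi⟩) else w m with hfdef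
      have hfval : ∀ m, f m = if m < k ⟨0, hi⟩ then w (k ⟨0, hi⟩) else w m := fun _ => rfl
      refine ⟨f, ?_, ?_, ?_, ?_⟩
      · intro m hm
        rcases lt_or_ge m (k ⟨0, hi⟩) with hc | hc
        · rw [hfval m, if_pos hc]
          rcases lt_or_ge (m+1) (k ⟨0, hi⟩) with hc2 | hc2
          · rw [hfval (m+1), if_pos hc2]
            exact FA.step_const h1A hwk.1.le hwk.2
          · rw [hfval (m+1), if_neg (not_lt.mpr hc2), show m+1 = k ⟨0, hi⟩ by omega]
            exact FA.step_const h1A hwk.1.le hwk.2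
        · rw [hfval m, if_neg (not_lt.mpr hc), hfval (m+1), if_neg (not_lt.mpr (by omega))]
          exact wstep m hc hm
      · intro j hj m hm1 hm2
        have hjJ : j = ⟨0, hi⟩ := by
          apply Fin.ext
          show (j:ℕ) = 0
          omega
        rw [hjJ] at hm1 hm2
        rw [hjJ, hfval m, if_neg (not_lt.mpr hm1)]
        linarith [werr m hm1 hm2]
      · intro m hm
        rcases lt_or_ge m (k ⟨0, hi⟩) with hc | hc
        · rw [hfval m, if_pos hc]; exact ⟨hwk.1.le, hwk.2⟩
        · rw [hfval m, if_neg (not_lt.mpr hc)]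
          have := wbnd m hc hm
          exact ⟨this.1.le, this.2⟩
      · rw [hfval _, if_neg (not_lt.mpr (hkl ⟨0, hi⟩))]
        linarith [wl]
    | succ i ihi =>
      intro hi
      obtain ⟨f, fstep, fwin, fbnd, fend⟩ := ihi (by omega)
      set I : Fin n := ⟨i, by omega⟩ with hIdef
      set J : Fin n := ⟨i+1, hi⟩ with hJdef
      have hsepIJ : l I + (N0+1) ≤ k J := hsep I J rfl
      have hIJ : l I < k J := by omega
      obtain ⟨w, wstep, werr, wbnd, wk, wl⟩ := window A h3 h1A hhalf hb δ hδ0 hδ1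
        ((x J : ℕ → ℝ)) (x J).2 (k J) (l J) (hkl J)
      have hwk := wbnd (k J) le_rfl (hkl J)
      have hwl := wbnd (l J) (hkl J) le_rfl
      set u := f (l I) with hudef
      set v := w (k J) with hvdef
      have hu1 : δ/6 ≤ u := fend
      have hu2 : u ≤ 1 := (fbnd (l I) le_rfl).2
      have hupos : 0 < u := by linarith
      have hv1 : δ/3 ≤ v := wk
      have hv2 : v ≤ 1 := hwk.2
      have hvpos : 0 < v := by linarith
      have hr1 : δ/3 ≤ v/u := by
        rw [le_div_iff₀ hupos]
        nlinarith
      have hr2 : v/u ≤ 6/δ := by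
        rw [div_le_div_iff₀ hupos hδ0]
        nlinarith
      obtain ⟨p, q, hpqN, hn1, hn2⟩ := hnet (v/u) hr1 hr2
      set gap := k J - l I with hgapdef
      have hpqgap : p + q ≤ gap := by omega
      obtain ⟨c, hc1, hc2, B, hB0, hBgap, hBstep⟩ := bridge A h3 h1A hhalf δ hδ0 hδ1
        u v hu1 hu2 hv1 hv2 gap p q hpqgap hn1 hn2
      have hcpos : 0 < c := by linarith
      set f' : ℕ → ℝ := fun m => if m ≤ l I then f m
        else if m < k J then B (m - l I) else c * w m with hf'def
      have hf'val : ∀ m, f' m = if m ≤ l I then f m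
          else if m < k J then B (m - l I) else c * w m := fun _ => rfl
      have hf'old : ∀ m, m ≤ l I → f' m = f m := by
        intro m hm; rw [hf'val m, if_pos hm]
      have hf'B : ∀ m, l I ≤ m → m ≤ k J → f' m = B (m - l I) := by
        intro m hm1 hm2
        rcases eq_or_lt_of_le hm1 with h | h
        · rw [← h, Nat.sub_self, hB0, hf'old _ le_rfl]
        · rcases eq_or_lt_of_le hm2 with h2 | h2
          · rw [hf'val m, if_neg (not_le.mpr h), if_neg (by omega), h2,
              show k J - l I = gap from rfl, hBgap]
          · rw [hf'val m, if_neg (not_le.mpr h), if_pos h2]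
      have hf'w : ∀ m, k J ≤ m → f' m = c * w m := by
        intro m hm
        rw [hf'val m, if_neg (not_le.mpr (by omega)), if_neg (not_lt.mpr hm)]
      have hlIJ : l I ≤ l J := lmono (i+1) hi i (by omega) (by omega)
      refine ⟨f', ?_, ?_, ?_, ?_⟩
      · -- steps
        intro m hm
        rcases lt_or_ge m (l I) with hcm | hcm
        · rw [hf'old m (by omega), hf'old (m+1) (by omega)]
          exact fstep m hcm
        · rcases lt_or_ge m (k J) with hcm2 | hcm2
          · rw [hf'B m (by omega) (by omega), hf'B (m+1) (by omega) (by omega),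
              show m + 1 - l I = (m - l I) + 1 by omega]
            exact hBstep (m - l I) (by omega)
          · rw [hf'w m hcm2, hf'w (m+1) (by omega)]
            exact FA.step_scale hcpos hc2 (wstep m hcm2 hm)
      · -- window approx
        intro j hj m hm1 hm2
        rcases Nat.lt_or_ge (j:ℕ) (i+1) with hji | hji
        · have hji' : (j:ℕ) ≤ i := by omega
          have hlj : l j ≤ l I := lmono i (by omega) (j:ℕ) j.2 hji'
          rw [hf'old m (le_trans hm2 hlj)]
          exact fwin j hji' m hm1 hm2
        · have hjJ : j = J := by
            apply Fin.ext
            show (j:ℕ) = i+1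
            omega
          rw [hjJ] at hm1 hm2
          rw [hjJ, hf'w m hm1]
          have herr := werr m hm1 hm2
          have hwb := wbnd m hm1 hm2
          have tri : |c * w m - (x J : ℕ → ℝ) m| ≤ |c * w m - w m| + |w m - (x J : ℕ → ℝ) m| :=
            abs_sub_le _ _ _
          have h1 : |c * w m - w m| = (1-c) * w m := by
            rw [show c * w m - w m = -((1-c) * w m) by ring, abs_neg,
              abs_of_nonneg (by nlinarith)]
          have h2 : (1-c) * w m ≤ δ := by nlinarith
          linarith
      · -- bounds
        intro m hm
        rcases le_or_gt m (l I) with hcm | hcm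
        · rw [hf'old m hcm]
          exact fbnd m hcm
        · rcases lt_or_ge m (k J) with hcm2 | hcm2
          · rw [hf'B m (by omega) (by omega)]
            have := FA.bounds (hBstep (m - l I) (by omega))
            exact ⟨this.1, this.2.1⟩
          · rw [hf'w m hcm2]
            have hwb := wbnd m hcm2 (by omega)
            constructor
            · exact mul_nonneg hcpos.le hwb.1.le
            · nlinarith [hwb.1, hwb.2]
      · -- end value
        rw [hf'w (l J) (hkl J)]
        nlinarith [wl, hwl.2]
  -- final assembly
  obtain ⟨f, fstep, fwin, fbnd, fend⟩ := key (n-1) (by omega)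
  set L := l ⟨n-1, by omega⟩ with hLdef
  have hfL : 0 ≤ f L ∧ f L ≤ 1 := fbnd L le_rfl
  have hy : (fun m => f (min m L)) ∈ MahavierPlus (FA A) := by
    intro m
    show (f (min m L), f (min (m+1) L)) ∈ FA A
    rcases lt_or_ge m L with hc | hc
    · rw [min_eq_left hc.le, min_eq_left (by omega)]
      exact fstep m hc
    · rw [min_eq_right hc, min_eq_right (by omega)]
      exact FA.step_const h1A hfL.1 hfL.2
  refine ⟨⟨fun m => f (min m L), hy⟩, ?_⟩
  intro i m hm1 hm2
  have hmL : m ≤ L := le_trans hm2 (lmono (n-1) (by omega) (i:ℕ) i.2 (by omega))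
  show dist ((x i : ℕ → ℝ) m) (f (min m L)) ≤ ε
  rw [min_eq_left hmL, Real.dist_eq, abs_sub_comm]
  have hfi : (i:ℕ) ≤ n - 1 := by omega
  have := fwin i hfi m hm1 hm2
  linarith

/-- For every `G ∈ 𝓕`, the one-sided Mahavier product `I_G^+` has the
CR-specification property. -/
theorem stmt10 (G : Set (ℝ × ℝ)) (hG : MemFamF G) : CRSpec G := by
  obtain ⟨A, h3, h1A, hhalf, hb, hGeq⟩ := hG
  subst hGeq
  exact mainCR A h3 h1A hhalf hb
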